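/- Let M be an N×N real matrix with nonnegative entries, and let u, v be nonnegative vectors in ℝ^N such that every entry of Me + u is strictly positive and vᵀe > 0. Let M̂ be the (N+1)×(N+1) block matrix [[M, u],[vᵀ, 0]], P = diag(M̂e)^{-1} M̂, and D(u) = diag(Me + u)^{-1}. Then a vector x̄ ∈ ℝ^N satisfies the linear system (I − Mᵀ D(u)) x̄ = v if and only if the vector x = (x̄, vᵀe) ∈ ℝ^{N+1} satisfies xᵀ = xᵀP. -/

import Mathlib

/-- Row-normalization `P = diag(M̂e)⁻¹ M̂` of a matrix. -/
noncomputable def rowNorm {ι : Type*} [Fintype ι] [DecidableEq ι] (A : Matrix ι ι ℝ) :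
    Matrix ι ι ℝ :=
  Matrix.diagonal (fun i => (∑ j, A i j)⁻¹) * A

/-- The `(N+1)×(N+1)` block matrix `M̂ = [[M, u],[vᵀ, 0]]`. -/
def hatM {N : ℕ} (M : Matrix (Fin N) (Fin N) ℝ) (u v : Fin N → ℝ) :
    Matrix (Fin N ⊕ Unit) (Fin N ⊕ Unit) ℝ := fun i j =>
  match i, j with
  | Sum.inl a, Sum.inl b => M a b
  | Sum.inl a, Sum.inr _ => u a
  | Sum.inr _, Sum.inl b => v b
  | Sum.inr _, Sum.inr _ => 0

/-- `D(u) = diag(Me + u)⁻¹`, the diagonal matrix with entries `1/((Me)_i + u_i)`. -/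
noncomputable def Du {N : ℕ} (M : Matrix (Fin N) (Fin N) ℝ) (u : Fin N → ℝ) :
    Matrix (Fin N) (Fin N) ℝ :=
  Matrix.diagonal fun i => ((∑ j, M i j) + u i)⁻¹

theorem stmt_6 {N : ℕ} (M : Matrix (Fin N) (Fin N) ℝ) (u v : Fin N → ℝ)
    (hM : ∀ i j, 0 ≤ M i j) (hu : ∀ i, 0 ≤ u i) (hv : ∀ i, 0 ≤ v i)
    (hpos : ∀ i, 0 < (∑ j, M i j) + u i) (hve : 0 < ∑ i, v i)
    (xbar : Fin N → ℝ) :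
    Matrix.mulVec (1 - M.transpose * Du M u) xbar = v ↔
      Matrix.vecMul (Sum.elim xbar fun _ => ∑ i, v i) (rowNorm (hatM M u v)) =
        Sum.elim xbar (fun _ => ∑ i, v i) := by
  classical
  set s : Fin N → ℝ := fun i => (∑ j, M i j) + u i with hsdef
  have hsne : ∀ i, s i ≠ 0 := fun i => (hpos i).ne'
  have hVne : (∑ i, v i) ≠ 0 := hve.ne'
  set x : (Fin N ⊕ Unit) → ℝ := Sum.elim xbar (fun _ => ∑ i, v i) with hxdef
  -- row sums of hatM
  have hrow1 : ∀ a : Fin N, (∑ j, hatM M u v (Sum.inl a) j) = s a := by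
    intro a
    rw [Fintype.sum_sum_type]
    simp [hatM, s]
  have hrow2 : (∑ j, hatM M u v (Sum.inr ()) j) = ∑ i, v i := by
    rw [Fintype.sum_sum_type]
    simp [hatM]
  -- LHS entrywise
  have hL : ∀ b, (Matrix.mulVec (1 - M.transpose * Du M u) xbar) b
      = xbar b - ∑ a, M a b * ((s a)⁻¹ * xbar a) := by
    intro b
    rw [Matrix.sub_mulVec, Matrix.one_mulVec]
    simp only [Pi.sub_apply]
    congr 1
    simp [Matrix.mulVec, dotProduct, Du, Matrix.mul_diagonal,
      Matrix.transpose_apply, mul_assoc, s]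
  have hP1 : ∀ a b, rowNorm (hatM M u v) (Sum.inl a) (Sum.inl b) = (s a)⁻¹ * M a b := by
    intro a b; simp [rowNorm, Matrix.diagonal_mul, hrow1, hatM, s]
  have hP2 : ∀ a (t : Unit), rowNorm (hatM M u v) (Sum.inl a) (Sum.inr t) = (s a)⁻¹ * u a := by
    intro a t; simp [rowNorm, Matrix.diagonal_mul, hrow1, hatM, s]
  have hP3 : ∀ (t : Unit) b, rowNorm (hatM M u v) (Sum.inr t) (Sum.inl b)
      = (∑ i, v i)⁻¹ * v b := by
    intro t b; cases t; simp [rowNorm, Matrix.diagonal_mul, hrow2, hatM]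
  have hP4 : ∀ (t t' : Unit), rowNorm (hatM M u v) (Sum.inr t) (Sum.inr t') = 0 := by
    intro t t'; simp [rowNorm, Matrix.diagonal_mul, hatM]
  -- RHS entrywise
  have hR1 : ∀ b, (Matrix.vecMul x (rowNorm (hatM M u v))) (Sum.inl b)
      = (∑ a, xbar a * ((s a)⁻¹ * M a b)) + v b := by
    intro b
    rw [Matrix.vecMul, dotProduct, Fintype.sum_sum_type]
    simp [hP1, hP3, x, mul_inv_cancel_left₀ hVne]
  have hR2 : (Matrix.vecMul x (rowNorm (hatM M u v))) (Sum.inr ())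
      = ∑ a, xbar a * ((s a)⁻¹ * u a) := by
    rw [Matrix.vecMul, dotProduct, Fintype.sum_sum_type]
    simp [hP2, hP4, x]
  -- key pointwise identity
  have key : ∀ a, xbar a * ((s a)⁻¹ * u a)
      = xbar a - ∑ b, M a b * ((s a)⁻¹ * xbar a) := by
    intro a
    rw [← Finset.sum_mul]
    have h1 : (s a)⁻¹ * s a = 1 := inv_mul_cancel₀ (hsne a)
    have hs' : (∑ b, M a b) = s a - u a := by simp [s]
    rw [hs']
    linear_combination xbar a * h1
  constructor
  · intro h
    have hb : ∀ b, xbar b - ∑ a, M a b * ((s a)⁻¹ * xbar a) = v b := by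
      intro b; rw [← hL b, h]
    funext j
    cases j with
    | inl b =>
      rw [hR1 b]
      have hswap : ∑ a, xbar a * ((s a)⁻¹ * M a b)
          = ∑ a, M a b * ((s a)⁻¹ * xbar a) :=
        Finset.sum_congr rfl (fun a _ => by ring)
      rw [hswap]
      have := hb b
      simp only [hxdef, Sum.elim_inl]
      linarith
    | inr t =>
      cases t
      rw [hR2]
      have hsum : ∑ b, (xbar b - ∑ a, M a b * ((s a)⁻¹ * xbar a)) = ∑ b, v b := by
        exact Finset.sum_congr rfl (fun b _ => hb b)
      have hswap : ∑ b, ∑ a, M a b * ((s a)⁻¹ * xbar a)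
          = ∑ a, ∑ b, M a b * ((s a)⁻¹ * xbar a) := Finset.sum_comm
      have hkey : ∑ a, xbar a * ((s a)⁻¹ * u a)
          = ∑ a, xbar a - ∑ a, ∑ b, M a b * ((s a)⁻¹ * xbar a) := by
        rw [← Finset.sum_sub_distrib]
        exact Finset.sum_congr rfl (fun a _ => key a)
      rw [hkey, ← hswap, ← Finset.sum_sub_distrib, hsum]
      simp [x]
  · intro h
    funext b
    rw [hL b]
    have h1 := congrFun h (Sum.inl b)
    rw [hR1 b] at h1
    have hswap : ∑ a, xbar a * ((s a)⁻¹ * M a b)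
        = ∑ a, M a b * ((s a)⁻¹ * xbar a) :=
      Finset.sum_congr rfl (fun a _ => by ring)
    rw [hswap] at h1
    simp only [hxdef, Sum.elim_inl] at h1
    linarith
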